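/- Let d ≥ 1 be an integer and α > 0. There is a constant C = C(d,α) < ∞ such that for every σ > 0 and every x ∈ ℝ^d: ∑_{t=1}^∞ (d/(2πσ²t))^{d/2} · exp(−d|x|²/(2σ²t)) · t^{−1−α/2} ≤ C·σ^α·(max(|x|, σ))^{−d−α}. -/

import Mathlib

open scoped BigOperators ENNReal

noncomputable section

namespace LongRange

private lemma exp_neg_le {q v : ℝ} (hq : 0 < q) (hv : 0 < v) :
    Real.exp (-v) ≤ q ^ q * Real.exp (-q) * v ^ (-q) := by
  have hvq : (0:ℝ) < v ^ q := Real.rpow_pos_of_pos hv q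
  have h1 : v ^ q ≤ q ^ q * Real.exp (v - q) := by
    rw [Real.rpow_def_of_pos hv, Real.rpow_def_of_pos hq, ← Real.exp_add]
    apply Real.exp_le_exp.2
    have hlog := Real.log_le_sub_one_of_pos (show 0 < v / q by positivity)
    rw [Real.log_div hv.ne' hq.ne'] at hlog
    have : q * Real.log v ≤ q * (Real.log q + (v / q - 1)) :=
      mul_le_mul_of_nonneg_left (by linarith) hq.le
    calc Real.log v * q = q * Real.log v := by ring
      _ ≤ q * (Real.log q + (v / q - 1)) := this
      _ = Real.log q * q + (v - q) := by field_simp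
  have key : Real.exp (-v) * v ^ q ≤ q ^ q * Real.exp (-q) := by
    calc Real.exp (-v) * v ^ q ≤ Real.exp (-v) * (q ^ q * Real.exp (v - q)) :=
          mul_le_mul_of_nonneg_left h1 (Real.exp_pos _).le
      _ = q ^ q * (Real.exp (-v) * Real.exp (v - q)) := by ring
      _ = q ^ q * Real.exp (-q) := by rw [← Real.exp_add]; congr 1; ring
  rw [Real.rpow_neg hv.le]
  calc Real.exp (-v) = Real.exp (-v) * v ^ q * (v ^ q)⁻¹ := by field_simp
    _ ≤ q ^ q * Real.exp (-q) * (v ^ q)⁻¹ :=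
        mul_le_mul_of_nonneg_right key (by positivity)

private lemma rpow_le_one_sub {p u : ℝ} (hp : 0 < p) (hu0 : 0 < u) (hu1 : u ≤ 1) :
    u ^ p ≤ 1 - min p 1 * (1 - u) := by
  rcases le_total p 1 with h | h
  · rw [min_eq_left h]
    have h2 := Real.geom_mean_le_arith_mean2_weighted hp.le (by linarith : (0:ℝ) ≤ 1 - p)
      hu0.le zero_le_one (by ring)
    rw [Real.one_rpow, mul_one, mul_one] at h2
    linarith
  · rw [min_eq_right h]
    have h2 : u ^ p ≤ u ^ (1:ℝ) := Real.rpow_le_rpow_of_exponent_ge hu0 hu1 h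
    rw [Real.rpow_one] at h2
    linarith

private lemma step {p : ℝ} (hp : 0 < p) (t : ℕ) (ht : 1 ≤ t) :
    (t:ℝ) ^ (-p - 1) ≤ (2 / min p 1) * ((t:ℝ) ^ (-p) - ((t:ℝ) + 1) ^ (-p)) := by
  have hc : 0 < min p 1 := lt_min hp one_pos
  have ht0 : (0:ℝ) < t := by exact_mod_cast ht
  have ht0' : (1:ℝ) ≤ t := by exact_mod_cast ht
  have ht1 : (0:ℝ) < (t:ℝ) + 1 := by linarith
  have hu0 : 0 < (t:ℝ) / ((t:ℝ) + 1) := by positivity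
  have hu1 : (t:ℝ) / ((t:ℝ) + 1) ≤ 1 := by rw [div_le_one ht1]; linarith
  have key := rpow_le_one_sub hp hu0 hu1
  have hsplit : ((t:ℝ) / ((t:ℝ) + 1)) ^ p = (t:ℝ) ^ p / ((t:ℝ) + 1) ^ p :=
    Real.div_rpow ht0.le ht1.le p
  set a := (t:ℝ) ^ p with ha
  set b := ((t:ℝ) + 1) ^ p with hb
  have ha0 : 0 < a := Real.rpow_pos_of_pos ht0 p
  have hb0 : 0 < b := Real.rpow_pos_of_pos ht1 p
  have hone : 1 - (t:ℝ) / ((t:ℝ) + 1) = 1 / ((t:ℝ) + 1) := by field_simp; ring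
  rw [hsplit, hone] at key
  -- key : a / b ≤ 1 - min p 1 * (1 / (t+1))
  have hna : (t:ℝ) ^ (-p) = a⁻¹ := by rw [Real.rpow_neg ht0.le]
  have hnb : ((t:ℝ) + 1) ^ (-p) = b⁻¹ := by rw [Real.rpow_neg ht1.le]
  have hna1 : (t:ℝ) ^ (-p - 1) = a⁻¹ * (t:ℝ)⁻¹ := by
    rw [show -p - 1 = -p + (-1) by ring, Real.rpow_add ht0, hna, Real.rpow_neg_one]
  rw [hna, hnb, hna1]
  have h1 : a⁻¹ * (min p 1 / ((t:ℝ) + 1)) ≤ a⁻¹ - b⁻¹ := by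
    have e : a⁻¹ - b⁻¹ = a⁻¹ * (1 - a / b) := by field_simp
    rw [e]
    apply mul_le_mul_of_nonneg_left _ (by positivity)
    have : min p 1 * (1 / ((t:ℝ) + 1)) = min p 1 / ((t:ℝ) + 1) := by ring
    linarith [key]
  have h2 : a⁻¹ * (min p 1 / (2 * (t:ℝ))) ≤ a⁻¹ * (min p 1 / ((t:ℝ) + 1)) := by
    apply mul_le_mul_of_nonneg_left _ (by positivity)
    apply div_le_div_of_nonneg_left hc.le (by linarith) (by linarith)
  have h3 : a⁻¹ * (t:ℝ)⁻¹ = (2 / min p 1) * (a⁻¹ * (min p 1 / (2 * (t:ℝ)))) := by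
    field_simp
  rw [h3]
  apply mul_le_mul_of_nonneg_left (le_trans h2 h1) (by positivity)

private lemma tail_sum {p : ℝ} (hp : 0 < p) (N : ℕ) (G : Finset ℕ)
    (hG : ∀ t ∈ G, N < t) :
    ∑ t ∈ G, (t:ℝ) ^ (-p - 1) ≤ (2 / min p 1) * ((N:ℝ) + 1) ^ (-p) := by
  have hc : 0 < min p 1 := lt_min hp one_pos
  set g : ℕ → ℝ := fun t => (t:ℝ) ^ (-p) with hg
  have hg0 : ∀ t, 0 ≤ g t := fun t => Real.rpow_nonneg (Nat.cast_nonneg t) _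
  have h1 : ∑ t ∈ G, (t:ℝ) ^ (-p - 1)
      ≤ ∑ t ∈ G, (2 / min p 1) * (g t - g (t + 1)) := by
    apply Finset.sum_le_sum
    intro t htG
    have ht1 : 1 ≤ t := by have := hG t htG; omega
    have := step hp t ht1
    simpa [hg, Nat.cast_add, Nat.cast_one] using this
  rw [← Finset.mul_sum] at h1
  refine h1.trans (mul_le_mul_of_nonneg_left ?_ (by positivity))
  have hganti : ∀ t : ℕ, 1 ≤ t → g (t + 1) ≤ g t := by
    intro t ht
    have h0 : (0:ℝ) < t := by exact_mod_cast ht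
    have h0' : (0:ℝ) < (t:ℝ) + 1 := by linarith
    have hmono : (t:ℝ) ^ p ≤ ((t:ℝ) + 1) ^ p :=
      Real.rpow_le_rpow h0.le (by linarith) hp.le
    have e1 : g t = ((t:ℝ) ^ p)⁻¹ := by rw [hg]; simp [Real.rpow_neg h0.le]
    have e2 : g (t + 1) = (((t:ℝ) + 1) ^ p)⁻¹ := by
      rw [hg]; simp only []
      rw [show ((t + 1 : ℕ) : ℝ) = (t:ℝ) + 1 by push_cast; ring, Real.rpow_neg h0'.le]
    rw [e1, e2]
    exact inv_anti₀ (Real.rpow_pos_of_pos h0 p) hmono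
  set M := G.sup id with hM
  have hsub : G ⊆ Finset.Ico (N + 1) (M + 1) := by
    intro t htG
    exact Finset.mem_Ico.2 ⟨hG t htG, Nat.lt_succ_of_le (Finset.le_sup (f := id) htG)⟩
  have htel : ∑ t ∈ Finset.Ico (N + 1) (M + 1), (g t - g (t + 1))
      = g (N + 1) - g (N + 1 + (M + 1 - (N + 1))) := by
    rw [Finset.sum_Ico_eq_sum_range]
    exact Finset.sum_range_sub' (fun i => g (N + 1 + i)) (M + 1 - (N + 1))
  calc ∑ t ∈ G, (g t - g (t + 1))
      ≤ ∑ t ∈ Finset.Ico (N + 1) (M + 1), (g t - g (t + 1)) := by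
        apply Finset.sum_le_sum_of_subset_of_nonneg hsub
        intro t htm _
        have ht1 : 1 ≤ t := by have := (Finset.mem_Ico.1 htm).1; omega
        exact sub_nonneg.2 (hganti t ht1)
    _ = g (N + 1) - g (N + 1 + (M + 1 - (N + 1))) := htel
    _ ≤ g (N + 1) := by linarith [hg0 (N + 1 + (M + 1 - (N + 1)))]
    _ = ((N:ℝ) + 1) ^ (-p) := by rw [hg]; push_cast; ring_nf

private def Cbound (d : ℕ) (α : ℝ) : ℝ :=
  ((d:ℝ) / (2 * Real.pi)) ^ ((d:ℝ) / 2) *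
    ((∑' n : ℕ, (n:ℝ) ^ (-(((d:ℝ) + α) / 2) - 1)) +
      2 * ((((d:ℝ) + α) / 2 + 1) ^ (((d:ℝ) + α) / 2 + 1) *
        Real.exp (-(((d:ℝ) + α) / 2 + 1)) * (2 / (d:ℝ)) ^ (((d:ℝ) + α) / 2 + 1)) +
      2 / min (((d:ℝ) + α) / 2) 1)

private lemma core (d : ℕ) (hd : 1 ≤ d) (α : ℝ) (hα : 0 < α) (σ : ℝ) (hσ : 0 < σ)
    (x : EuclideanSpace ℝ (Fin d)) (G : Finset ℕ) (hG : ∀ t ∈ G, 1 ≤ t) :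
    ∑ t ∈ G, (((d : ℝ) / (2 * Real.pi * σ ^ 2 * (t : ℝ))) ^ ((d : ℝ) / 2) *
        Real.exp (-((d : ℝ) * ‖x‖ ^ 2) / (2 * σ ^ 2 * (t : ℝ))) * ((t : ℝ)) ^ (-1 - α / 2))
      ≤ Cbound d α * σ ^ α * max ‖x‖ σ ^ (-(d : ℝ) - α) := by
  have hd0 : (0:ℝ) < d := by exact_mod_cast hd
  have hπ : 0 < Real.pi := Real.pi_pos
  have hp : 0 < ((d:ℝ) + α) / 2 := by positivity
  set p := ((d:ℝ) + α) / 2 with hpdef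
  set q := p + 1 with hqdef
  have hq : 0 < q := by rw [hqdef]; linarith
  set K := ((d:ℝ) / (2 * Real.pi)) ^ ((d:ℝ) / 2) with hKdef
  have hK : 0 < K := Real.rpow_pos_of_pos (by positivity) _
  set Z := ∑' n : ℕ, (n:ℝ) ^ (-p - 1) with hZdef
  have hZ : 0 ≤ Z := tsum_nonneg (fun n => Real.rpow_nonneg (Nat.cast_nonneg n) _)
  set A := q ^ q * Real.exp (-q) * (2 / (d:ℝ)) ^ q with hAdef
  have hA : 0 ≤ A := by
    rw [hAdef]
    have h1 : (0:ℝ) ≤ q ^ q := Real.rpow_nonneg hq.le _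
    have h2 : (0:ℝ) ≤ (2 / (d:ℝ)) ^ q := Real.rpow_nonneg (by positivity) _
    positivity
  have hc : 0 < min p 1 := lt_min hp one_pos
  have hCb : Cbound d α = K * (Z + 2 * A + 2 / min p 1) := rfl
  have hsummable : Summable (fun n : ℕ => (n:ℝ) ^ (-p - 1)) :=
    Real.summable_nat_rpow.2 (by linarith)
  have hterm : ∀ t : ℕ, 1 ≤ t →
      ((d : ℝ) / (2 * Real.pi * σ ^ 2 * (t : ℝ))) ^ ((d : ℝ) / 2) *
        Real.exp (-((d : ℝ) * ‖x‖ ^ 2) / (2 * σ ^ 2 * (t : ℝ))) * ((t : ℝ)) ^ (-1 - α / 2)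
      = K * σ ^ (-(d:ℝ)) * ((t:ℝ) ^ (-p - 1) *
          Real.exp (-((d : ℝ) * ‖x‖ ^ 2) / (2 * σ ^ 2 * (t : ℝ)))) := by
    intro t ht
    have ht0 : (0:ℝ) < t := by exact_mod_cast ht
    have hb : (d:ℝ) / (2 * Real.pi * σ ^ 2 * (t:ℝ))
        = ((d:ℝ) / (2 * Real.pi)) * ((σ ^ 2)⁻¹ * ((t:ℝ))⁻¹) := by
      rw [div_eq_mul_inv, div_eq_mul_inv, mul_inv, mul_inv]; ring
    have hσ2 : (0:ℝ) ≤ σ ^ 2 := by positivity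
    rw [hb, Real.mul_rpow (by positivity) (by positivity),
        Real.mul_rpow (by positivity) (by positivity),
        Real.inv_rpow hσ2, Real.inv_rpow ht0.le,
        ← Real.rpow_neg hσ2, ← Real.rpow_neg ht0.le]
    have hσ2p : (σ ^ 2) ^ (-((d:ℝ) / 2)) = σ ^ (-(d:ℝ)) := by
      rw [← Real.rpow_natCast σ 2, ← Real.rpow_mul hσ.le]
      congr 1; push_cast; ring
    have ht3 : (t:ℝ) ^ (-((d:ℝ) / 2)) * (t:ℝ) ^ (-1 - α / 2) = (t:ℝ) ^ (-p - 1) := by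
      rw [← Real.rpow_add ht0]; congr 1; rw [hpdef]; ring
    rw [hσ2p, ← ht3, hKdef]; ring
  rw [Finset.sum_congr rfl (fun t htG => hterm t (hG t htG))]
  set S := σ ^ (-(d:ℝ)) with hSdef
  have hS : 0 < S := Real.rpow_pos_of_pos hσ _
  have hKS : (0:ℝ) ≤ K * S := by positivity
  have hexp1 : ∀ t : ℕ, Real.exp (-((d : ℝ) * ‖x‖ ^ 2) / (2 * σ ^ 2 * (t : ℝ))) ≤ 1 := by
    intro t
    apply Real.exp_le_one_iff.2
    apply div_nonpos_of_nonpos_of_nonneg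
    · have : (0:ℝ) ≤ (d:ℝ) * ‖x‖ ^ 2 := by positivity
      linarith
    · positivity
  rcases le_or_gt ‖x‖ σ with hxσ | hxσ
  · -- Case A : ‖x‖ ≤ σ
    rw [max_eq_right hxσ]
    have hσpow : σ ^ α * σ ^ (-(d:ℝ) - α) = S := by
      rw [hSdef, ← Real.rpow_add hσ]; congr 1; ring
    calc ∑ t ∈ G, K * S * ((t:ℝ) ^ (-p - 1) *
            Real.exp (-((d : ℝ) * ‖x‖ ^ 2) / (2 * σ ^ 2 * (t : ℝ))))
        ≤ ∑ t ∈ G, K * S * (t:ℝ) ^ (-p - 1) := by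
          apply Finset.sum_le_sum
          intro t htG
          have := mul_le_of_le_one_right (Real.rpow_nonneg (Nat.cast_nonneg t) (-p-1)) (hexp1 t)
          calc K * S * ((t:ℝ) ^ (-p - 1) *
              Real.exp (-((d : ℝ) * ‖x‖ ^ 2) / (2 * σ ^ 2 * (t : ℝ))))
              ≤ K * S * ((t:ℝ) ^ (-p - 1)) := mul_le_mul_of_nonneg_left this hKS
            _ = K * S * (t:ℝ) ^ (-p - 1) := by ring
      _ = K * S * ∑ t ∈ G, (t:ℝ) ^ (-p - 1) := by rw [Finset.mul_sum]
      _ ≤ K * S * Z := by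
          apply mul_le_mul_of_nonneg_left _ hKS
          exact Summable.sum_le_tsum G (fun i _ => Real.rpow_nonneg (Nat.cast_nonneg i) _) hsummable
      _ ≤ Cbound d α * σ ^ α * σ ^ (-(d:ℝ) - α) := by
          have e : Cbound d α * σ ^ α * σ ^ (-(d:ℝ) - α)
              = K * (Z + 2 * A + 2 / min p 1) * S := by
            rw [hCb, mul_assoc (K * (Z + 2 * A + 2 / min p 1)) (σ ^ α), hσpow]
          rw [e]
          calc K * S * Z = (K * Z) * S := by ring
            _ ≤ (K * (Z + 2 * A + 2 / min p 1)) * S := by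
                apply mul_le_mul_of_nonneg_right _ hS.le
                apply mul_le_mul_of_nonneg_left _ hK.le
                have : (0:ℝ) ≤ 2 / min p 1 := by positivity
                linarith
  · -- Case B : σ < ‖x‖
    have hx0 : 0 < ‖x‖ := hσ.trans hxσ
    rw [max_eq_left hxσ.le]
    have hx2 : (0:ℝ) < ‖x‖ ^ 2 := by positivity
    have hσ2 : (0:ℝ) < σ ^ 2 := by positivity
    set ρ := ‖x‖ ^ 2 / σ ^ 2 with hρdef
    have hρ0 : 0 < ρ := by rw [hρdef]; positivity
    have hρ1 : 1 ≤ ρ := by rw [hρdef, le_div_iff₀ hσ2]; nlinarith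
    set N := ⌈ρ⌉₊ with hNdef
    have hN1 : 1 ≤ N := Nat.ceil_pos.2 hρ0
    have hNρ : ρ ≤ (N:ℝ) := Nat.le_ceil ρ
    have hN2 : (N:ℝ) ≤ 2 * ρ := by
      have := Nat.ceil_lt_add_one hρ0.le
      rw [← hNdef] at this
      linarith
    have hρpn : (0:ℝ) ≤ ρ ^ (-p) := Real.rpow_nonneg hρ0.le _
    have hρqn : (0:ℝ) ≤ ρ ^ (-q) := Real.rpow_nonneg hρ0.le _
    -- head termwise bound
    have hhead1 : ∀ t : ℕ, 1 ≤ t → (t:ℝ) ^ (-p - 1) *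
        Real.exp (-((d : ℝ) * ‖x‖ ^ 2) / (2 * σ ^ 2 * (t : ℝ))) ≤ A * ρ ^ (-q) := by
      intro t ht
      have ht0 : (0:ℝ) < t := by exact_mod_cast ht
      set v := ((d:ℝ) * ‖x‖ ^ 2) / (2 * σ ^ 2 * (t:ℝ)) with hvdef
      have hv : 0 < v := by rw [hvdef]; positivity
      have harg : -((d:ℝ) * ‖x‖ ^ 2) / (2 * σ ^ 2 * (t:ℝ)) = -v := by
        rw [hvdef]; ring
      rw [harg]
      have he := exp_neg_le hq hv
      have hvinv : v⁻¹ = (2 / (d:ℝ)) * ρ⁻¹ * (t:ℝ) := by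
        rw [hvdef, hρdef]; field_simp
      have hvq : v ^ (-q) = (2 / (d:ℝ)) ^ q * ρ ^ (-q) * (t:ℝ) ^ q := by
        rw [Real.rpow_neg hv.le, ← Real.inv_rpow hv.le, hvinv,
            Real.mul_rpow (by positivity) ht0.le,
            Real.mul_rpow (by positivity) (by positivity),
            Real.inv_rpow hρ0.le, ← Real.rpow_neg hρ0.le]
      have htq : (t:ℝ) ^ (-p - 1) * (t:ℝ) ^ q = 1 := by
        rw [← Real.rpow_add ht0, hqdef, show -p - 1 + (p + 1) = 0 by ring, Real.rpow_zero]
      calc (t:ℝ) ^ (-p - 1) * Real.exp (-v)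
          ≤ (t:ℝ) ^ (-p - 1) * (q ^ q * Real.exp (-q) * v ^ (-q)) :=
            mul_le_mul_of_nonneg_left he (Real.rpow_nonneg ht0.le _)
        _ = ((t:ℝ) ^ (-p - 1) * (t:ℝ) ^ q) *
              (q ^ q * Real.exp (-q) * (2 / (d:ℝ)) ^ q * ρ ^ (-q)) := by rw [hvq]; ring
        _ = A * ρ ^ (-q) := by rw [htq, one_mul, hAdef]
    have hKSA : (0:ℝ) ≤ K * S * (A * ρ ^ (-q)) :=
      mul_nonneg hKS (mul_nonneg hA hρqn)
    rw [← Finset.sum_filter_add_sum_filter_not G (fun t => t ≤ N)]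
    have hheadsum : ∑ t ∈ G.filter (fun t => t ≤ N), K * S * ((t:ℝ) ^ (-p - 1) *
          Real.exp (-((d : ℝ) * ‖x‖ ^ 2) / (2 * σ ^ 2 * (t : ℝ))))
        ≤ (N:ℝ) * (K * S * (A * ρ ^ (-q))) := by
      have hsub : G.filter (fun t => t ≤ N) ⊆ Finset.Icc 1 N := by
        intro t htm
        rw [Finset.mem_filter] at htm
        exact Finset.mem_Icc.2 ⟨hG t htm.1, htm.2⟩
      have hcard : (G.filter (fun t => t ≤ N)).card ≤ N := by
        have h := Finset.card_le_card hsub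
        rwa [Nat.card_Icc, Nat.add_sub_cancel] at h
      calc ∑ t ∈ G.filter (fun t => t ≤ N), K * S * ((t:ℝ) ^ (-p - 1) *
            Real.exp (-((d : ℝ) * ‖x‖ ^ 2) / (2 * σ ^ 2 * (t : ℝ))))
          ≤ ∑ _t ∈ G.filter (fun t => t ≤ N), K * S * (A * ρ ^ (-q)) := by
            apply Finset.sum_le_sum
            intro t htm
            exact mul_le_mul_of_nonneg_left
              (hhead1 t (hG t (Finset.mem_filter.1 htm).1)) hKS
        _ = ((G.filter (fun t => t ≤ N)).card : ℝ) * (K * S * (A * ρ ^ (-q))) := by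
            rw [Finset.sum_const, nsmul_eq_mul]
        _ ≤ (N:ℝ) * (K * S * (A * ρ ^ (-q))) := by
            apply mul_le_mul_of_nonneg_right _ hKSA
            exact_mod_cast hcard
    have htailsum : ∑ t ∈ G.filter (fun t => ¬ t ≤ N), K * S * ((t:ℝ) ^ (-p - 1) *
          Real.exp (-((d : ℝ) * ‖x‖ ^ 2) / (2 * σ ^ 2 * (t : ℝ))))
        ≤ K * S * ((2 / min p 1) * ((N:ℝ) + 1) ^ (-p)) := by
      calc ∑ t ∈ G.filter (fun t => ¬ t ≤ N), K * S * ((t:ℝ) ^ (-p - 1) *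
            Real.exp (-((d : ℝ) * ‖x‖ ^ 2) / (2 * σ ^ 2 * (t : ℝ))))
          ≤ ∑ t ∈ G.filter (fun t => ¬ t ≤ N), K * S * (t:ℝ) ^ (-p - 1) := by
            apply Finset.sum_le_sum
            intro t htm
            have h1 := mul_le_of_le_one_right
              (Real.rpow_nonneg (Nat.cast_nonneg t) (-p-1)) (hexp1 t)
            exact mul_le_mul_of_nonneg_left h1 hKS
        _ = K * S * ∑ t ∈ G.filter (fun t => ¬ t ≤ N), (t:ℝ) ^ (-p - 1) := by
            rw [Finset.mul_sum]
        _ ≤ K * S * ((2 / min p 1) * ((N:ℝ) + 1) ^ (-p)) := by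
            apply mul_le_mul_of_nonneg_left _ hKS
            apply tail_sum hp N
            intro t htm
            have := (Finset.mem_filter.1 htm).2
            omega
    have hNp1 : ((N:ℝ) + 1) ^ (-p) ≤ ρ ^ (-p) := by
      rw [Real.rpow_neg (by linarith : (0:ℝ) ≤ (N:ℝ) + 1), Real.rpow_neg hρ0.le]
      apply inv_anti₀ (Real.rpow_pos_of_pos hρ0 p)
      exact Real.rpow_le_rpow hρ0.le (by linarith) hp.le
    have hNq : (N:ℝ) * ρ ^ (-q) ≤ 2 * ρ ^ (-p) := by
      calc (N:ℝ) * ρ ^ (-q) ≤ (2 * ρ) * ρ ^ (-q) :=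
            mul_le_mul_of_nonneg_right hN2 hρqn
        _ = 2 * (ρ ^ (1:ℝ) * ρ ^ (-q)) := by rw [Real.rpow_one]; ring
        _ = 2 * ρ ^ (-p) := by
            rw [← Real.rpow_add hρ0, hqdef, show (1:ℝ) + -(p + 1) = -p by ring]
    have hSR : S * ρ ^ (-p) = σ ^ α * ‖x‖ ^ (-(d:ℝ) - α) := by
      have e1 : (‖x‖ ^ 2) ^ (-p) = ‖x‖ ^ (-(d:ℝ) - α) := by
        rw [← Real.rpow_natCast ‖x‖ 2, ← Real.rpow_mul hx0.le]
        congr 1; rw [hpdef]; push_cast; ring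
      have e2 : (σ ^ 2) ^ (-p) = σ ^ (-((d:ℝ) + α)) := by
        rw [← Real.rpow_natCast σ 2, ← Real.rpow_mul hσ.le]
        congr 1; rw [hpdef]; push_cast; ring
      calc S * ρ ^ (-p)
          = (σ ^ (-(d:ℝ)) / σ ^ (-((d:ℝ) + α))) * ‖x‖ ^ (-(d:ℝ) - α) := by
            rw [hρdef, Real.div_rpow hx2.le hσ2.le, e1, e2, hSdef]; ring
        _ = σ ^ α * ‖x‖ ^ (-(d:ℝ) - α) := by
            rw [← Real.rpow_sub hσ, show -(d:ℝ) - -((d:ℝ) + α) = α by ring]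
    calc ∑ t ∈ G.filter (fun t => t ≤ N), K * S * ((t:ℝ) ^ (-p - 1) *
            Real.exp (-((d : ℝ) * ‖x‖ ^ 2) / (2 * σ ^ 2 * (t : ℝ))))
          + ∑ t ∈ G.filter (fun t => ¬ t ≤ N), K * S * ((t:ℝ) ^ (-p - 1) *
            Real.exp (-((d : ℝ) * ‖x‖ ^ 2) / (2 * σ ^ 2 * (t : ℝ))))
        ≤ (N:ℝ) * (K * S * (A * ρ ^ (-q)))
            + K * S * ((2 / min p 1) * ((N:ℝ) + 1) ^ (-p)) := add_le_add hheadsum htailsum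
      _ ≤ K * S * (2 * A * ρ ^ (-p)) + K * S * ((2 / min p 1) * ρ ^ (-p)) := by
          apply add_le_add
          · calc (N:ℝ) * (K * S * (A * ρ ^ (-q))) = (K * S * A) * ((N:ℝ) * ρ ^ (-q)) := by ring
              _ ≤ (K * S * A) * (2 * ρ ^ (-p)) :=
                  mul_le_mul_of_nonneg_left hNq (mul_nonneg hKS hA)
              _ = K * S * (2 * A * ρ ^ (-p)) := by ring
          · apply mul_le_mul_of_nonneg_left _ hKS
            apply mul_le_mul_of_nonneg_left hNp1 (by positivity)
      _ = K * (2 * A + 2 / min p 1) * (S * ρ ^ (-p)) := by ring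
      _ ≤ K * (Z + 2 * A + 2 / min p 1) * (S * ρ ^ (-p)) := by
          apply mul_le_mul_of_nonneg_right _ (mul_nonneg hS.le hρpn)
          apply mul_le_mul_of_nonneg_left _ hK.le
          linarith
      _ = Cbound d α * σ ^ α * ‖x‖ ^ (-(d:ℝ) - α) := by
          rw [hCb, mul_assoc (K * (Z + 2 * A + 2 / min p 1)) (σ ^ α), ← hSR]

/-- Gaussian-sum estimate
`∑_{t≥1} (d/(2πσ²t))^{d/2} e^{−d|x|²/(2σ²t)} t^{−1−α/2} ≤ C σ^α max(|x|,σ)^{−d−α}`. -/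
theorem statement19 (d : ℕ) (hd : 1 ≤ d) (α : ℝ) (hα : 0 < α) :
    ∃ C : ℝ, 0 ≤ C ∧ ∀ σ : ℝ, 0 < σ → ∀ x : EuclideanSpace ℝ (Fin d),
      (∑' t : ℕ+, ENNReal.ofReal
          (((d : ℝ) / (2 * Real.pi * σ ^ 2 * ((t : ℕ) : ℝ))) ^ ((d : ℝ) / 2) *
            Real.exp (-((d : ℝ) * ‖x‖ ^ 2) / (2 * σ ^ 2 * ((t : ℕ) : ℝ))) *
            (((t : ℕ) : ℝ)) ^ (-1 - α / 2))) ≤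
        ENNReal.ofReal (C * σ ^ α * max ‖x‖ σ ^ (-(d : ℝ) - α)) := by
  have hd0 : (0:ℝ) < d := by exact_mod_cast hd
  have hp : 0 < ((d:ℝ) + α) / 2 := by positivity
  have hc : 0 < min (((d:ℝ) + α) / 2) 1 := lt_min hp one_pos
  have hq : (0:ℝ) < ((d:ℝ) + α) / 2 + 1 := by linarith
  have hCnn : 0 ≤ Cbound d α := by
    apply mul_nonneg (Real.rpow_nonneg (by positivity) _)
    have h1 : 0 ≤ ∑' n : ℕ, (n:ℝ) ^ (-(((d:ℝ) + α) / 2) - 1) :=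
      tsum_nonneg (fun n => Real.rpow_nonneg (Nat.cast_nonneg n) _)
    have h2 : (0:ℝ) ≤ (((d:ℝ) + α) / 2 + 1) ^ (((d:ℝ) + α) / 2 + 1) :=
      Real.rpow_nonneg hq.le _
    have h3 : (0:ℝ) ≤ (2 / (d:ℝ)) ^ (((d:ℝ) + α) / 2 + 1) :=
      Real.rpow_nonneg (by positivity) _
    have h4 : (0:ℝ) ≤ 2 / min (((d:ℝ) + α) / 2) 1 := by positivity
    have h5 : (0:ℝ) < Real.exp (-(((d:ℝ) + α) / 2 + 1)) := Real.exp_pos _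
    have h6 : (0:ℝ) ≤ (((d:ℝ) + α) / 2 + 1) ^ (((d:ℝ) + α) / 2 + 1) *
        Real.exp (-(((d:ℝ) + α) / 2 + 1)) * (2 / (d:ℝ)) ^ (((d:ℝ) + α) / 2 + 1) :=
      mul_nonneg (mul_nonneg h2 h5.le) h3
    linarith
  refine ⟨Cbound d α, hCnn, fun σ hσ x => ?_⟩
  rw [ENNReal.tsum_eq_iSup_sum]
  apply iSup_le
  intro F
  have hnn : ∀ t : ℕ+, t ∈ F → 0 ≤
      ((d : ℝ) / (2 * Real.pi * σ ^ 2 * ((t : ℕ) : ℝ))) ^ ((d : ℝ) / 2) *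
        Real.exp (-((d : ℝ) * ‖x‖ ^ 2) / (2 * σ ^ 2 * ((t : ℕ) : ℝ))) *
        (((t : ℕ) : ℝ)) ^ (-1 - α / 2) := by
    intro t _
    have h1 : (0:ℝ) ≤ (d : ℝ) / (2 * Real.pi * σ ^ 2 * ((t : ℕ) : ℝ)) := by positivity
    exact mul_nonneg (mul_nonneg (Real.rpow_nonneg h1 _) (Real.exp_pos _).le)
      (Real.rpow_nonneg (Nat.cast_nonneg _) _)
  rw [← ENNReal.ofReal_sum_of_nonneg hnn]
  apply ENNReal.ofReal_le_ofReal
  have himg : ∑ t ∈ F,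
      (((d : ℝ) / (2 * Real.pi * σ ^ 2 * ((t : ℕ) : ℝ))) ^ ((d : ℝ) / 2) *
        Real.exp (-((d : ℝ) * ‖x‖ ^ 2) / (2 * σ ^ 2 * ((t : ℕ) : ℝ))) *
        (((t : ℕ) : ℝ)) ^ (-1 - α / 2))
      = ∑ t ∈ F.image (fun t : ℕ+ => (t : ℕ)),
      (((d : ℝ) / (2 * Real.pi * σ ^ 2 * (t : ℝ))) ^ ((d : ℝ) / 2) *
        Real.exp (-((d : ℝ) * ‖x‖ ^ 2) / (2 * σ ^ 2 * (t : ℝ))) *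
        ((t : ℝ)) ^ (-1 - α / 2)) := by
    rw [Finset.sum_image]
    intro a _ b _ h
    exact PNat.coe_injective h
  rw [himg]
  apply core d hd α hα σ hσ x
  intro t htm
  rcases Finset.mem_image.1 htm with ⟨a, _, rfl⟩
  exact a.one_le

end LongRange
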